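/- Define the map ℱ on functions ψ : ℝ → ℂ by ℱ(ψ)(θ) := e^{i(1+Λ²)θ} · p↓ / (1 − p↑ ψ(Λ² θ)). Then for any two functions ψ₁, ψ₂ : ℝ → ℂ with |ψ₁(θ)| ≤ 1 and |ψ₂(θ)| ≤ 1 for all θ, one has ‖ℱ(ψ₁) − ℱ(ψ₂)‖_∞ ≤ (p↑/p↓) ‖ψ₁ − ψ₂‖_∞, with p↑/p↓ < 1. Consequently, φ_Z is the unique fixed point of ℱ among characteristic functions, and for any characteristic function ψ, ℱⁿ(ψ) converges uniformly to φ_Z with exponential rate. -/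

import Mathlib

open MeasureTheory Filter Finset Topology

open MeasureTheory Filter Finset

/-- The law of the level Markov chain on `ℕ` which, from state `0`, moves to `1` with
probability `puu` and stays at `0` with probability `1 - puu`, and from a state `j > 0`,
moves to `j+1` with probability `pu`, to `j-1` with probability `pd`, and stays at `j`
with probability `1 - pu - pd`; with initial distribution `ν`.  The law is characterized
by its finite-dimensional distributions. -/
def IsLevelChainLaw (puu pu pd : ℝ) (ν : Measure ℕ) (P : Measure (ℕ → ℕ)) : Prop :=
  ∀ (n : ℕ) (a : ℕ → ℕ),
    P {ω | ∀ i ≤ n, ω i = a i} =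
      ν {a 0} * ENNReal.ofReal (∏ i ∈ Finset.range n,
        (if a i = 0 then (if a (i + 1) = 1 then puu else if a (i + 1) = 0 then 1 - puu else 0)
         else if a (i + 1) = a i + 1 then pu
         else if a (i + 1) + 1 = a i then pd
         else if a (i + 1) = a i then 1 - pu - pd
         else 0))

/-- First return time of the path `ω` to level `0`. -/
noncomputable def tau0 (ω : ℕ → ℕ) : ℕ := sInf {j | 1 ≤ j ∧ ω j = 0}

/-- `Z := Σ_{j=0}^{τ₀−1} Λ^{2 L_j}`. -/
noncomputable def Zvar (Λ : ℝ) (ω : ℕ → ℕ) : ℝ :=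
  ∑ j ∈ Finset.range (tau0 ω), Λ ^ (2 * ω j)

/-- The characteristic function `φ_Z(θ) = E₀[e^{iθZ}]` of `Z` under the law `P0`. -/
noncomputable def phiZ (Λ : ℝ) (P0 : Measure (ℕ → ℕ)) (θ : ℝ) : ℂ :=
  ∫ ω, Complex.exp (Complex.I * (θ : ℂ) * ((Zvar Λ ω : ℝ) : ℂ)) ∂P0

/-- `ℓ(θ) := (1 − φ_Z(θ)) / |θ|^{α/2}` for `θ ≠ 0`. -/
noncomputable def ellZ (Λ α : ℝ) (P0 : Measure (ℕ → ℕ)) (θ : ℝ) : ℂ :=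
  (1 - phiZ Λ P0 θ) / ((|θ| ^ (α / 2) : ℝ) : ℂ)


/-- The map `ℱ(ψ)(θ) := e^{i(1+Λ²)θ} p↓ / (1 − p↑ ψ(Λ²θ))`. -/
noncomputable def mapF (Λ pu pd : ℝ) (ψ : ℝ → ℂ) : ℝ → ℂ :=
  fun θ => Complex.exp (Complex.I * (((1 + Λ ^ 2) * θ : ℝ) : ℂ)) * (pd : ℂ) /
    (1 - (pu : ℂ) * ψ (Λ ^ 2 * θ))

/-- `ψ` is the characteristic function of some probability measure on `ℝ`. -/
def IsCharFun (ψ : ℝ → ℂ) : Prop :=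
  ∃ μ : Measure ℝ, IsProbabilityMeasure μ ∧
    ∀ θ : ℝ, ψ θ = ∫ x, Complex.exp (Complex.I * (θ : ℂ) * (x : ℂ)) ∂μ


namespace LevelChain

/-- Binary-tree encoding of first-passage paths from level 1 to level 0. -/
inductive Exc : Type
  | down : Exc
  | up : Exc → Exc → Exc
deriving DecidableEq

namespace Exc

/-- number of steps -/
def len : Exc → ℕ
  | down => 1
  | up a b => 1 + len a + len b

/-- number of up-steps -/
def size : Exc → ℕ
  | down => 0
  | up a b => 1 + size a + size b

/-- probability weight -/
noncomputable def w (pu pd : ℝ) : Exc → ℝ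
  | down => pd
  | up a b => pu * w pu pd a * w pu pd b

/-- `Σ_{j<len} Λ^{2 L_j}` for the path started at level 1. -/
noncomputable def A (Λ : ℝ) : Exc → ℝ
  | down => Λ ^ 2
  | up a b => Λ ^ 2 + Λ ^ 2 * A Λ a + A Λ b

/-- level at time `j` of the path started at level 1 (junk `0` after `len`). -/
def pathFn : Exc → ℕ → ℕ
  | down, j => if j = 0 then 1 else 0
  | up a b, j => if j = 0 then 1 else if j ≤ len a then pathFn a (j - 1) + 1
      else pathFn b (j - 1 - len a)

theorem one_le_len (e : Exc) : 1 ≤ len e := by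
  cases e <;> simp [len] <;> omega

theorem pathFn_zero (e : Exc) : pathFn e 0 = 1 := by cases e <;> simp [pathFn]

theorem pathFn_pos (e : Exc) : ∀ j, j < len e → 1 ≤ pathFn e j := by
  induction e with
  | down => intro j hj; simp only [len] at hj; interval_cases j; simp [pathFn]
  | up a b iha ihb =>
    intro j hj
    rcases Nat.eq_zero_or_pos j with rfl | hj0
    · simp [pathFn]
    · by_cases h : j ≤ len a
      · simp only [pathFn]
        rw [if_neg (by omega), if_pos h]
        omega
      · simp only [pathFn]
        rw [if_neg (by omega), if_neg h]
        exact ihb _ (by simp only [len] at hj; omega)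

theorem pathFn_len (e : Exc) : pathFn e (len e) = 0 := by
  induction e with
  | down => simp [pathFn, len]
  | up a b iha ihb =>
    have ha := one_le_len a; have hb := one_le_len b
    simp only [pathFn]
    rw [if_neg (by simp only [len]; omega), if_neg (by simp only [len]; omega)]
    simp only [len]
    have : 1 + len a + len b - 1 - len a = len b := by omega
    rw [this, ihb]

theorem pathFn_up_left (a b : Exc) {j : ℕ} (h1 : 1 ≤ j) (h2 : j ≤ len a) :
    pathFn (up a b) j = pathFn a (j - 1) + 1 := by
  simp only [pathFn]; rw [if_neg (by omega), if_pos h2]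

theorem pathFn_up_right (a b : Exc) {j : ℕ} (h1 : len a < j) :
    pathFn (up a b) j = pathFn b (j - 1 - len a) := by
  have := one_le_len a
  simp only [pathFn]; rw [if_neg (by omega), if_neg (by omega)]

/-- injectivity of the path data -/
theorem eq_of_pathFn_eq : ∀ e f : Exc, len e = len f →
    (∀ j, j ≤ len e → pathFn e j = pathFn f j) → e = f := by
  intro e
  induction e with
  | down =>
    intro f hlen _
    cases f with
    | down => rfl
    | up a b =>
      have := one_le_len a; have := one_le_len b
      simp [len] at hlen; omega
  | up a b iha ihb =>
    intro f hlen hpath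
    cases f with
    | down =>
      have := one_le_len a; have := one_le_len b
      simp [len] at hlen; omega
    | up c d =>
      have hla := one_le_len a; have hlb := one_le_len b
      have hlc := one_le_len c; have hld := one_le_len d
      simp only [len] at hlen
      -- first: len a = len c
      have hac : len a = len c := by
        by_contra hne
        rcases lt_or_gt_of_ne hne with h | h
        · -- len a < len c
          have h1 : pathFn (up a b) (len a + 1) = pathFn b 0 := by
            rw [pathFn_up_right a b (by omega)]; congr 1; omega
          have h2 : pathFn (up c d) (len a + 1) = pathFn c (len a) + 1 := by
            rw [pathFn_up_left c d (by omega) (by omega)]; congr 2 <;> omega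
          have h3 := hpath (len a + 1) (by simp only [len]; omega)
          rw [h1, h2, pathFn_zero] at h3
          have := pathFn_pos c (len a) (by omega)
          omega
        · have h1 : pathFn (up c d) (len c + 1) = pathFn d 0 := by
            rw [pathFn_up_right c d (by omega)]; congr 1; omega
          have h2 : pathFn (up a b) (len c + 1) = pathFn a (len c) + 1 := by
            rw [pathFn_up_left a b (by omega) (by omega)]; congr 2 <;> omega
          have h3 := hpath (len c + 1) (by simp only [len]; omega)
          rw [h1, h2, pathFn_zero] at h3
          have := pathFn_pos a (len c) (by omega)
          omega
      have hbd : len b = len d := by omega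
      have ha : a = c := by
        apply iha _ hac
        intro j hj
        rcases Nat.eq_or_lt_of_le hj with rfl | hj'
        · rw [pathFn_len, hac, pathFn_len]
        · have h3 := hpath (j + 1) (by simp only [len]; omega)
          rw [pathFn_up_left a b (by omega) (by omega),
            pathFn_up_left c d (by omega) (by omega)] at h3
          simpa using h3
      have hb : b = d := by
        apply ihb _ hbd
        intro j hj
        have h3 := hpath (1 + len a + j) (by simp only [len]; omega)
        rw [pathFn_up_right a b (by omega), pathFn_up_right c d (by omega)] at h3
        have e1 : 1 + len a + j - 1 - len a = j := by omega
        have e2 : 1 + len a + j - 1 - len c = j := by omega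
        rwa [e1, e2] at h3
      rw [ha, hb]
      -- done

end Exc
end LevelChain


namespace LevelChain
namespace Exc
variable {pu pd Λ : ℝ}

/-- single transition weight (away from 0) -/
noncomputable def step (pu pd : ℝ) (j k : ℕ) : ℝ :=
  if k = j + 1 then pu else if k + 1 = j then pd else if k = j then 1 - pu - pd else 0

theorem step_shift (j k : ℕ) : step pu pd (j + 1) (k + 1) = step pu pd j k := by
  simp only [step]
  by_cases h1 : k = j + 1 <;> by_cases h2 : k + 1 = j <;> by_cases h3 : k = j <;>
    simp_all <;> omega

theorem pathFn_up_left' (a b : Exc) {i : ℕ} (h : i ≤ len a) :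
    pathFn (up a b) (i + 1) = pathFn a i + 1 := by
  rcases Nat.eq_or_lt_of_le h with rfl | h'
  · rw [pathFn_up_right a b (by omega)]
    have h0 : len a + 1 - 1 - len a = 0 := by omega
    rw [h0, pathFn_zero, pathFn_len]
  · rw [pathFn_up_left a b (by omega) (by omega)]; simp

theorem pathFn_up_right' (a b : Exc) (i : ℕ) :
    pathFn (up a b) (1 + len a + i) = pathFn b i := by
  rw [pathFn_up_right a b (by omega)]; congr 1; omega

theorem prod_step (e : Exc) :
    ∏ i ∈ Finset.range (len e), step pu pd (pathFn e i) (pathFn e (i + 1)) = w pu pd e := by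
  induction e with
  | down => simp [len, pathFn, step, w]
  | up a b iha ihb =>
    have hla := one_le_len a
    have h1 : len (up a b) = (1 + len a) + len b := by simp [len]
    rw [h1, Finset.prod_range_add]
    have h2 : ∀ x ∈ Finset.range (len b),
        step pu pd (pathFn (up a b) (1 + len a + x)) (pathFn (up a b) (1 + len a + x + 1)) =
        step pu pd (pathFn b x) (pathFn b (x + 1)) := by
      intro x _
      have : 1 + len a + x + 1 = 1 + len a + (x + 1) := by omega
      rw [this, pathFn_up_right', pathFn_up_right']
    rw [Finset.prod_congr rfl h2, ihb]
    have h3 : 1 + len a = len a + 1 := by omega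
    rw [h3, Finset.prod_range_succ']
    have h4 : ∀ x ∈ Finset.range (len a),
        step pu pd (pathFn (up a b) (x + 1)) (pathFn (up a b) (x + 1 + 1)) =
        step pu pd (pathFn a x) (pathFn a (x + 1)) := by
      intro x hx
      simp only [Finset.mem_range] at hx
      rw [pathFn_up_left' a b (by omega), pathFn_up_left' a b (by omega), step_shift]
    rw [Finset.prod_congr rfl h4, iha]
    have h5 : pathFn (up a b) 0 = 1 := pathFn_zero _
    have h6 : pathFn (up a b) (0 + 1) = 2 := by
      rw [pathFn_up_left' a b (by omega), pathFn_zero]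
    have h7 : step pu pd 1 2 = pu := by norm_num [step]
    rw [h5, h6, h7]
    simp only [w]; ring

theorem sum_pow (e : Exc) :
    ∑ j ∈ Finset.range (len e), Λ ^ (2 * pathFn e j) = A Λ e := by
  induction e with
  | down => simp [len, pathFn, A]
  | up a b iha ihb =>
    have hla := one_le_len a
    have h1 : len (up a b) = (1 + len a) + len b := by simp [len]
    rw [h1, Finset.sum_range_add]
    have h2 : ∀ x ∈ Finset.range (len b),
        Λ ^ (2 * pathFn (up a b) (1 + len a + x)) = Λ ^ (2 * pathFn b x) := by
      intro x _; rw [pathFn_up_right']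
    rw [Finset.sum_congr rfl h2, ihb]
    have h3 : 1 + len a = len a + 1 := by omega
    rw [h3, Finset.sum_range_succ']
    have h4 : ∀ x ∈ Finset.range (len a),
        Λ ^ (2 * pathFn (up a b) (x + 1)) = Λ ^ 2 * Λ ^ (2 * pathFn a x) := by
      intro x hx
      simp only [Finset.mem_range] at hx
      rw [pathFn_up_left' a b (by omega)]
      rw [Nat.mul_add, pow_add]; ring
    rw [Finset.sum_congr rfl h4, ← Finset.mul_sum, iha, pathFn_zero]
    simp [A]; ring

end Exc
end LevelChain


namespace LevelChain
namespace Exc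

def toNat : Exc → ℕ
  | down => 0
  | up a b => Nat.pair (toNat a) (toNat b) + 1

theorem toNat_injective : Function.Injective toNat := by
  intro e
  induction e with
  | down => intro f h; cases f with
    | down => rfl
    | up a b => simp [toNat] at h
  | up a b iha ihb =>
    intro f h
    cases f with
    | down => simp [toNat] at h
    | up c d =>
      simp only [toNat, Nat.add_right_cancel_iff] at h
      have h2 := Nat.pair_eq_pair.mp h
      rw [iha h2.1, ihb h2.2]

instance : Countable Exc := ⟨toNat, toNat_injective⟩

theorem up_injective : Function.Injective (fun p : Exc × Exc => up p.1 p.2) := by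
  intro ⟨a, b⟩ ⟨c, d⟩ h
  simp only [up.injEq] at h
  simp [h.1, h.2]

/-- decompose a tsum over `Exc` by the first constructor -/
theorem tsum_decomp {M : Type*} [AddCommGroup M] [TopologicalSpace M] [T2Space M]
    [IsTopologicalAddGroup M] (f : Exc → M) (hf : Summable f) :
    ∑' e, f e = f down + ∑' p : Exc × Exc, f (up p.1 p.2) := by
  classical
  rw [Summable.tsum_eq_add_tsum_ite hf down]
  congr 1
  have h := Function.Injective.tsum_eq up_injective
    (f := fun e => if e = down then 0 else f e) ?_
  · rw [← h]
    apply tsum_congr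
    intro ⟨a, b⟩
    simp
  · intro e he
    simp only [Function.mem_support] at he
    cases e with
    | down => simp at he
    | up a b => exact ⟨(a, b), rfl⟩

variable {pu pd Λ : ℝ}

theorem w_nonneg (hpu : 0 ≤ pu) (hpd : 0 ≤ pd) (e : Exc) : 0 ≤ w pu pd e := by
  induction e with
  | down => exact hpd
  | up a b iha ihb => exact mul_nonneg (mul_nonneg hpu iha) ihb

theorem sum_w_le (hpu : 0 ≤ pu) (hpd : 0 ≤ pd) (hsum : pu + pd ≤ 1) :
    ∀ N : ℕ, ∀ s : Finset Exc, (∀ e ∈ s, size e < N) → ∑ e ∈ s, w pu pd e ≤ 1 := by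
  classical
  intro N
  induction N with
  | zero =>
    intro s hs
    have : s = ∅ := Finset.eq_empty_of_forall_notMem fun e he => Nat.not_lt_zero _ (hs e he)
    simp [this]
  | succ N ih =>
    intro s hs
    set sd := s.filter (· = down) with hsd
    set su := s.filter (· ≠ down) with hsu
    have hsplit : ∑ e ∈ s, w pu pd e = ∑ e ∈ sd, w pu pd e + ∑ e ∈ su, w pu pd e := by
      rw [hsd, hsu, Finset.sum_filter_add_sum_filter_not]
    have hd : ∑ e ∈ sd, w pu pd e ≤ pd := by
      have hsub : sd ⊆ {down} := by
        intro e he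
        simp only [hsd, Finset.mem_filter] at he
        simp [he.2]
      calc ∑ e ∈ sd, w pu pd e ≤ ∑ e ∈ {down}, w pu pd e :=
            Finset.sum_le_sum_of_subset_of_nonneg hsub
              (fun e _ _ => w_nonneg hpu hpd e)
        _ = pd := by simp [w]
      -- children map
    set t : Finset (Exc × Exc) := su.image (fun e => match e with
      | down => (down, down)
      | up a b => (a, b)) with ht
    have himg : ∑ e ∈ su, w pu pd e = ∑ p ∈ t, pu * w pu pd p.1 * w pu pd p.2 := by
      rw [ht]
      rw [Finset.sum_image]
      · apply Finset.sum_congr rfl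
        intro e he
        simp only [hsu, Finset.mem_filter] at he
        cases e with
        | down => exact absurd rfl he.2
        | up a b => simp [w]
      · intro x hx y hy hxy
        simp only [hsu, Finset.mem_coe, Finset.mem_filter] at hx hy
        cases x with
        | down => exact absurd rfl hx.2
        | up a b => cases y with
          | down => exact absurd rfl hy.2
          | up c d => simp_all
    set t1 := t.image Prod.fst with ht1
    set t2 := t.image Prod.snd with ht2
    have hmem : ∀ p ∈ t, size p.1 < N ∧ size p.2 < N := by
      intro p hp
      simp only [ht, Finset.mem_image] at hp
      obtain ⟨e, he, hpe⟩ := hp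
      simp only [hsu, Finset.mem_filter] at he
      cases e with
      | down => exact absurd rfl he.2
      | up a b =>
        have := hs _ he.1
        simp only [size] at this
        cases hpe
        constructor <;> simp <;> omega
    have hsubset : t ⊆ t1 ×ˢ t2 := by
      intro p hp
      simp only [ht1, ht2, Finset.mem_product, Finset.mem_image]
      exact ⟨⟨p, hp, rfl⟩, ⟨p, hp, rfl⟩⟩
    have hup : ∑ p ∈ t, pu * w pu pd p.1 * w pu pd p.2 ≤ pu := by
      calc ∑ p ∈ t, pu * w pu pd p.1 * w pu pd p.2
          ≤ ∑ p ∈ t1 ×ˢ t2, pu * w pu pd p.1 * w pu pd p.2 :=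
            Finset.sum_le_sum_of_subset_of_nonneg hsubset (fun p _ _ =>
              mul_nonneg (mul_nonneg hpu (w_nonneg hpu hpd _)) (w_nonneg hpu hpd _))
        _ = pu * ((∑ x ∈ t1, w pu pd x) * (∑ y ∈ t2, w pu pd y)) := by
            rw [Finset.sum_product, Finset.sum_mul_sum, Finset.mul_sum]
            refine Finset.sum_congr rfl fun x _ => ?_
            rw [Finset.mul_sum]
            exact Finset.sum_congr rfl fun y _ => by ring
        _ ≤ pu * (1 * 1) := by
            apply mul_le_mul_of_nonneg_left _ hpu
            have h1 : ∑ x ∈ t1, w pu pd x ≤ 1 := by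
              apply ih
              intro x hx
              simp only [ht1, Finset.mem_image] at hx
              obtain ⟨p, hp, rfl⟩ := hx
              exact (hmem p hp).1
            have h2 : ∑ y ∈ t2, w pu pd y ≤ 1 := by
              apply ih
              intro y hy
              simp only [ht2, Finset.mem_image] at hy
              obtain ⟨p, hp, rfl⟩ := hy
              exact (hmem p hp).2
            exact mul_le_mul h1 h2 (Finset.sum_nonneg fun y _ => w_nonneg hpu hpd y)
              zero_le_one
        _ = pu := by ring
    calc ∑ e ∈ s, w pu pd e = ∑ e ∈ sd, w pu pd e + ∑ e ∈ su, w pu pd e := hsplit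
      _ ≤ pd + pu := by rw [himg]; exact add_le_add hd hup
      _ ≤ 1 := by linarith

theorem summable_w (hpu : 0 ≤ pu) (hpd : 0 ≤ pd) (hsum : pu + pd ≤ 1) :
    Summable (w pu pd) := by
  apply summable_of_sum_le (fun e => w_nonneg hpu hpd e)
  intro u
  exact sum_w_le hpu hpd hsum (u.sup size + 1) u
    (fun e he => Nat.lt_succ_of_le (Finset.le_sup he))

theorem tsum_w_le_one (hpu : 0 ≤ pu) (hpd : 0 ≤ pd) (hsum : pu + pd ≤ 1) :
    ∑' e, w pu pd e ≤ 1 := by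
  apply Summable.tsum_le_of_sum_le (summable_w hpu hpd hsum)
  intro u
  exact sum_w_le hpu hpd hsum (u.sup size + 1) u
    (fun e he => Nat.lt_succ_of_le (Finset.le_sup he))

theorem summable_norm_w (hpu : 0 ≤ pu) (hpd : 0 ≤ pd) (hsum : pu + pd ≤ 1) :
    Summable (fun e => ‖w pu pd e‖) := by
  have : ∀ e, ‖w pu pd e‖ = w pu pd e := fun e => by
    rw [Real.norm_eq_abs, abs_of_nonneg (w_nonneg hpu hpd e)]
  simpa [this] using summable_w hpu hpd hsum

theorem tsum_w (hpu : 0 < pu) (hpd : 0 < pd) (hsum : pu + pd = 1) (hlt : pu < pd) :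
    ∑' e, w pu pd e = 1 := by
  have hS := summable_w hpu.le hpd.le hsum.le
  have hnorm := summable_norm_w hpu.le hpd.le hsum.le
  have hmul : (∑' e, w pu pd e) * (∑' e, w pu pd e)
      = ∑' p : Exc × Exc, w pu pd p.1 * w pu pd p.2 :=
    tsum_mul_tsum_of_summable_norm hnorm hnorm
  have hrec : (∑' e, w pu pd e)
      = pd + pu * ((∑' e, w pu pd e) * (∑' e, w pu pd e)) := by
    nth_rewrite 1 [tsum_decomp _ hS]
    have h1 : ∀ p : Exc × Exc, w pu pd (up p.1 p.2) = pu * (w pu pd p.1 * w pu pd p.2) := by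
      intro p; simp [w]; ring
    rw [tsum_congr h1, tsum_mul_left, ← hmul]
    rfl
  set S := ∑' e, w pu pd e with hSdef
  have hle : S ≤ 1 := tsum_w_le_one hpu.le hpd.le hsum.le
  have hfact : (S - 1) * (pu * S - pd) = 0 := by nlinarith [hrec]
  rcases mul_eq_zero.mp hfact with h | h
  · linarith
  · exfalso
    nlinarith

end Exc
end LevelChain


namespace LevelChain

/-- `e^{it}` for real `t`. -/
noncomputable def ce (t : ℝ) : ℂ := Complex.exp (Complex.I * (t : ℂ))

theorem norm_ce (t : ℝ) : ‖ce t‖ = 1 := by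
  have : Complex.I * (t : ℂ) = (t : ℂ) * Complex.I := mul_comm _ _
  rw [ce, this, Complex.norm_exp_ofReal_mul_I]

theorem ce_add (s t : ℝ) : ce (s + t) = ce s * ce t := by
  rw [ce, ce, ce, ← Complex.exp_add]
  congr 1
  push_cast
  ring

namespace Exc
variable {pu pd Λ : ℝ}

/-- `G(θ) = Σ_e w(e) e^{iθ A(e)}`. -/
noncomputable def G (pu pd Λ : ℝ) (θ : ℝ) : ℂ := ∑' e, (w pu pd e : ℂ) * ce (θ * A Λ e)

theorem norm_cterm (hpu : 0 ≤ pu) (hpd : 0 ≤ pd) (e : Exc) (t : ℝ) :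
    ‖(w pu pd e : ℂ) * ce t‖ = w pu pd e := by
  rw [norm_mul, norm_ce, mul_one, Complex.norm_real, Real.norm_eq_abs,
    abs_of_nonneg (w_nonneg hpu hpd e)]

theorem summable_cterm (hpu : 0 ≤ pu) (hpd : 0 ≤ pd) (hsum : pu + pd ≤ 1)
    (t : Exc → ℝ) : Summable (fun e => (w pu pd e : ℂ) * ce (t e)) := by
  apply Summable.of_norm
  have : ∀ e, ‖(w pu pd e : ℂ) * ce (t e)‖ = w pu pd e :=
    fun e => norm_cterm hpu hpd e (t e)
  simpa only [this] using summable_w hpu hpd hsum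

theorem summable_norm_cterm (hpu : 0 ≤ pu) (hpd : 0 ≤ pd) (hsum : pu + pd ≤ 1)
    (t : Exc → ℝ) : Summable (fun e => ‖(w pu pd e : ℂ) * ce (t e)‖) := by
  have : ∀ e, ‖(w pu pd e : ℂ) * ce (t e)‖ = w pu pd e :=
    fun e => norm_cterm hpu hpd e (t e)
  simpa only [this] using summable_w hpu hpd hsum

theorem norm_G_le_one (hpu : 0 < pu) (hpd : 0 < pd) (hsum : pu + pd = 1)
    (hlt : pu < pd) (θ : ℝ) : ‖G pu pd Λ θ‖ ≤ 1 := by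
  calc ‖G pu pd Λ θ‖ ≤ ∑' e, ‖(w pu pd e : ℂ) * ce (θ * A Λ e)‖ :=
        norm_tsum_le_tsum_norm (summable_norm_cterm hpu.le hpd.le hsum.le _)
    _ = ∑' e, w pu pd e := tsum_congr fun e => norm_cterm hpu.le hpd.le e _
    _ = 1 := tsum_w hpu hpd hsum hlt

theorem G_rec (hpu : 0 < pu) (hpd : 0 < pd) (hsum : pu + pd = 1) (θ : ℝ) :
    G pu pd Λ θ = (pd : ℂ) * ce (Λ ^ 2 * θ)
      + (pu : ℂ) * ce (Λ ^ 2 * θ) * G pu pd Λ (Λ ^ 2 * θ) * G pu pd Λ θ := by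
  have hsummable := summable_cterm hpu.le hpd.le hsum.le (fun e => θ * A Λ e)
  have hmul : G pu pd Λ (Λ ^ 2 * θ) * G pu pd Λ θ
      = ∑' p : Exc × Exc, ((w pu pd p.1 : ℂ) * ce ((Λ ^ 2 * θ) * A Λ p.1))
          * ((w pu pd p.2 : ℂ) * ce (θ * A Λ p.2)) :=
    tsum_mul_tsum_of_summable_norm
      (summable_norm_cterm hpu.le hpd.le hsum.le _)
      (summable_norm_cterm hpu.le hpd.le hsum.le _)
  nth_rewrite 1 [G, tsum_decomp _ hsummable]
  have hdown : (w pu pd down : ℂ) * ce (θ * A Λ down) = (pd : ℂ) * ce (Λ ^ 2 * θ) := by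
    rw [show w pu pd down = pd from rfl, show A Λ down = Λ ^ 2 from rfl, mul_comm θ]
  rw [hdown]
  congr 1
  have h1 : ∀ p : Exc × Exc,
      (w pu pd (up p.1 p.2) : ℂ) * ce (θ * A Λ (up p.1 p.2))
      = ((pu : ℂ) * ce (Λ ^ 2 * θ)) *
        (((w pu pd p.1 : ℂ) * ce ((Λ ^ 2 * θ) * A Λ p.1))
          * ((w pu pd p.2 : ℂ) * ce (θ * A Λ p.2))) := by
    intro p
    have hw : w pu pd (up p.1 p.2) = pu * w pu pd p.1 * w pu pd p.2 := rfl
    have hA : A Λ (up p.1 p.2) = Λ ^ 2 + Λ ^ 2 * A Λ p.1 + A Λ p.2 := rfl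
    have hsplit : θ * A Λ (up p.1 p.2)
        = (Λ ^ 2 * θ) + ((Λ ^ 2 * θ) * A Λ p.1 + θ * A Λ p.2) := by
      rw [hA]; ring
    rw [hsplit, ce_add, ce_add, hw]
    push_cast
    ring
  rw [tsum_congr h1, tsum_mul_left, ← hmul]
  ring

end Exc
end LevelChain


open MeasureTheory



namespace LevelChain
namespace Exc

variable {pu pd Λ : ℝ}

/-- the full path of the excursion, starting at level 0 -/
def fullPath (e : Exc) : ℕ → ℕ := fun j => if j = 0 then 0 else pathFn e (j - 1)

/-- the cylinder set of the excursion -/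
def Cyl (e : Exc) : Set (ℕ → ℕ) := {ω | ∀ i ≤ len e + 1, ω i = fullPath e i}

theorem measurableSet_cyl (e : Exc) : MeasurableSet (Cyl e) := by
  have : Cyl e = ⋂ i ∈ Set.Iic (len e + 1), (fun ω : ℕ → ℕ => ω i) ⁻¹' {fullPath e i} := by
    ext ω; simp [Cyl, Set.mem_iInter]
  rw [this]
  exact MeasurableSet.biInter (Set.to_countable _)
    (fun i _ => measurable_pi_apply i (measurableSet_singleton _))

theorem cyl_measure {P0 : Measure (ℕ → ℕ)}
    (hP0 : IsLevelChainLaw 1 pu pd (Measure.dirac 0) P0) (e : Exc) :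
    P0 (Cyl e) = ENNReal.ofReal (w pu pd e) := by
  have h := hP0 (len e + 1) (fullPath e)
  have hCyl : Cyl e = {ω | ∀ i ≤ len e + 1, ω i = fullPath e i} := rfl
  have h0 : fullPath e 0 = 0 := rfl
  rw [hCyl, h, h0]
  have hdirac : (Measure.dirac 0 : Measure ℕ) {0} = 1 :=
    Measure.dirac_apply_of_mem (Set.mem_singleton 0)
  rw [hdirac, one_mul]
  congr 1
  rw [Finset.prod_range_succ']
  have h1 : fullPath e (0 + 1) = 1 := by
    show (if (0 + 1 : ℕ) = 0 then 0 else pathFn e (0 + 1 - 1)) = 1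
    simp [pathFn_zero]
  have hterm0 : (if fullPath e 0 = 0 then
      (if fullPath e (0 + 1) = 1 then (1:ℝ) else if fullPath e (0 + 1) = 0 then 1 - 1 else 0)
      else if fullPath e (0 + 1) = fullPath e 0 + 1 then pu
      else if fullPath e (0 + 1) + 1 = fullPath e 0 then pd
      else if fullPath e (0 + 1) = fullPath e 0 then 1 - pu - pd
      else 0) = 1 := by
    rw [h0, h1]; norm_num
  rw [hterm0, mul_one]
  rw [← prod_step (pu := pu) (pd := pd) e]
  apply Finset.prod_congr rfl
  intro i hi
  simp only [Finset.mem_range] at hi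
  have hai : fullPath e (i + 1) = pathFn e i := by
    show (if i + 1 = 0 then 0 else pathFn e (i + 1 - 1)) = pathFn e i
    simp
  have hai2 : fullPath e (i + 1 + 1) = pathFn e (i + 1) := by
    show (if i + 1 + 1 = 0 then 0 else pathFn e (i + 1 + 1 - 1)) = pathFn e (i + 1)
    simp
  have hne : fullPath e (i + 1) ≠ 0 := by
    rw [hai]
    have := pathFn_pos e i hi
    omega
  rw [if_neg hne, hai, hai2, step]

theorem cyl_disjoint : Pairwise (Function.onFun Disjoint Cyl) := by
  intro e f hef
  rw [Function.onFun, Set.disjoint_left]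
  intro ω he hf
  apply hef
  -- wlog len e ≤ len f
  have key : ∀ a b : Exc, len a ≤ len b →
      (∀ i ≤ len a + 1, ω i = fullPath a i) → (∀ i ≤ len b + 1, ω i = fullPath b i) →
      a = b := by
    intro a b hab ha hb
    have hlen : len a = len b := by
      by_contra hne
      have hlt : len a < len b := lt_of_le_of_ne hab hne
      have h1 : ω (len a + 1) = fullPath a (len a + 1) := ha _ le_rfl
      have h2 : ω (len a + 1) = fullPath b (len a + 1) := hb _ (by omega)
      have h3 : fullPath a (len a + 1) = 0 := by
        show (if len a + 1 = 0 then 0 else pathFn a (len a + 1 - 1)) = 0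
        simp [pathFn_len]
      have h4 : 1 ≤ fullPath b (len a + 1) := by
        show 1 ≤ (if len a + 1 = 0 then 0 else pathFn b (len a + 1 - 1))
        simp only [if_neg (Nat.succ_ne_zero _)]
        exact pathFn_pos b _ (by omega)
      omega
    apply eq_of_pathFn_eq a b hlen
    intro j hj
    have h1 := ha (j + 1) (by omega)
    have h2 := hb (j + 1) (by omega)
    have e1 : fullPath a (j + 1) = pathFn a j := by
      show (if j + 1 = 0 then 0 else pathFn a (j + 1 - 1)) = pathFn a j
      simp
    have e2 : fullPath b (j + 1) = pathFn b j := by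
      show (if j + 1 = 0 then 0 else pathFn b (j + 1 - 1)) = pathFn b j
      simp
    rw [e1] at h1; rw [e2] at h2
    rw [← h1, ← h2]
  rcases le_total (len e) (len f) with h | h
  · exact key e f h he hf
  · exact (key f e h hf he).symm

theorem tau0_cyl {e : Exc} {ω : ℕ → ℕ} (hω : ω ∈ Cyl e) : tau0 ω = len e + 1 := by
  have hmem : len e + 1 ∈ {j | 1 ≤ j ∧ ω j = 0} := by
    constructor
    · omega
    · rw [hω _ le_rfl]
      show (if len e + 1 = 0 then 0 else pathFn e (len e + 1 - 1)) = 0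
      simp [pathFn_len]
  apply le_antisymm (Nat.sInf_le hmem)
  apply le_csInf ⟨_, hmem⟩
  intro j hj
  obtain ⟨hj1, hj2⟩ := hj
  by_contra hcon
  push_neg at hcon
  have hlt : j ≤ len e := by omega
  have : ω j = fullPath e j := hω _ (by omega)
  have : ω j = pathFn e (j - 1) := by
    rw [this]
    show (if j = 0 then 0 else pathFn e (j - 1)) = pathFn e (j - 1)
    rw [if_neg (by omega)]
  have hpos := pathFn_pos e (j - 1) (by omega)
  omega

theorem Zvar_cyl {e : Exc} {ω : ℕ → ℕ} (hω : ω ∈ Cyl e) : Zvar Λ ω = 1 + A Λ e := by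
  rw [Zvar, tau0_cyl hω, Finset.sum_range_succ']
  have h0 : ω 0 = 0 := by
    rw [hω 0 (by omega)]; rfl
  have hterm : ∀ i ∈ Finset.range (len e), Λ ^ (2 * ω (i + 1)) = Λ ^ (2 * pathFn e i) := by
    intro i hi
    simp only [Finset.mem_range] at hi
    have : ω (i + 1) = fullPath e (i + 1) := hω _ (by omega)
    rw [this]
    simp [fullPath]
  have hone : Λ ^ (2 * ω 0) = 1 := by rw [h0]; norm_num
  rw [Finset.sum_congr rfl hterm, sum_pow, hone]
  ring

theorem measurable_tau0 : Measurable tau0 := by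
  apply measurable_to_countable'
  intro n
  match n with
  | 0 =>
    have : tau0 ⁻¹' {0} = ⋂ j, ⋂ (_ : 1 ≤ j), {ω : ℕ → ℕ | ω j ≠ 0} := by
      ext ω
      simp only [Set.mem_preimage, Set.mem_singleton_iff, Set.mem_iInter, tau0,
        Set.mem_setOf_eq]
      constructor
      · intro h j hj hzero
        have hmem : j ∈ {j | 1 ≤ j ∧ ω j = 0} := ⟨hj, hzero⟩
        have := Nat.sInf_le hmem
        have hne : ({j | 1 ≤ j ∧ ω j = 0} : Set ℕ).Nonempty := ⟨j, hmem⟩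
        have := Nat.sInf_mem hne
        rw [h] at this
        exact absurd this.1 (by omega)
      · intro h
        rw [Nat.sInf_eq_zero]
        right
        ext j
        simp only [Set.mem_setOf_eq, Set.mem_empty_iff_false, iff_false, not_and]
        intro hj
        exact h j hj
    rw [this]
    exact MeasurableSet.iInter fun j => MeasurableSet.iInter fun _ =>
      ((measurable_pi_apply j) (measurableSet_singleton 0)).compl
  | Nat.succ m =>
    have : tau0 ⁻¹' {m + 1} =
        {ω : ℕ → ℕ | ω (m + 1) = 0} ∩ ⋂ j ∈ Set.Icc 1 m, {ω : ℕ → ℕ | ω j ≠ 0} := by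
      ext ω
      simp only [Set.mem_preimage, Set.mem_singleton_iff, Set.mem_inter_iff,
        Set.mem_setOf_eq, Set.mem_iInter, Set.mem_Icc, tau0]
      constructor
      · intro h
        have hne : ({j | 1 ≤ j ∧ ω j = 0} : Set ℕ).Nonempty := by
          by_contra hcon
          rw [Set.not_nonempty_iff_eq_empty] at hcon
          rw [hcon] at h
          simp at h
        have hmem := Nat.sInf_mem hne
        rw [h] at hmem
        refine ⟨hmem.2, ?_⟩
        intro j hj hzero
        have : sInf {j | 1 ≤ j ∧ ω j = 0} ≤ j := Nat.sInf_le ⟨hj.1, hzero⟩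
        omega
      · intro ⟨h1, h2⟩
        have hmem : m + 1 ∈ {j | 1 ≤ j ∧ ω j = 0} := ⟨by omega, h1⟩
        apply le_antisymm (Nat.sInf_le hmem)
        by_contra hcon
        push_neg at hcon
        have hne : ({j | 1 ≤ j ∧ ω j = 0} : Set ℕ).Nonempty := ⟨_, hmem⟩
        have hmem2 := Nat.sInf_mem hne
        exact h2 _ ⟨hmem2.1, by omega⟩ hmem2.2
    rw [this]
    refine MeasurableSet.inter ?_ ?_
    · exact (measurable_pi_apply (m + 1)) (measurableSet_singleton 0)
    · exact MeasurableSet.biInter (Set.to_countable _) fun j _ =>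
        ((measurable_pi_apply j) (measurableSet_singleton 0)).compl

theorem measurable_Zvar : Measurable (Zvar Λ) := by
  have hF : ∀ n : ℕ, Measurable (fun ω : ℕ → ℕ => ∑ j ∈ Finset.range n, Λ ^ (2 * ω j)) := by
    intro n
    apply Finset.measurable_sum
    intro j _
    exact Measurable.comp (f := fun ω : ℕ → ℕ => ω j)
      (g := fun k : ℕ => Λ ^ (2 * k)) (measurable_from_top) (measurable_pi_apply j)
  intro s hs
  have : Zvar Λ ⁻¹' s = ⋃ n, (tau0 ⁻¹' {n}) ∩
      ((fun ω : ℕ → ℕ => ∑ j ∈ Finset.range n, Λ ^ (2 * ω j)) ⁻¹' s) := by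
    ext ω
    simp only [Set.mem_preimage, Set.mem_iUnion, Set.mem_inter_iff, Set.mem_singleton_iff]
    constructor
    · intro h; exact ⟨tau0 ω, rfl, h⟩
    · rintro ⟨n, rfl, h⟩; exact h
  rw [this]
  exact MeasurableSet.iUnion fun n =>
    (measurable_tau0 (measurableSet_singleton n)).inter (hF n hs)

/-- The key identity: `φ_Z` as a sum over excursions. -/
theorem phiZ_eq_tsum {P0 : Measure (ℕ → ℕ)} [IsProbabilityMeasure P0]
    (hP0 : IsLevelChainLaw 1 pu pd (Measure.dirac 0) P0)
    (hpu : 0 < pu) (hpd : 0 < pd) (hsum : pu + pd = 1) (hlt : pu < pd) (θ : ℝ) :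
    phiZ Λ P0 θ = ∑' e, (w pu pd e : ℂ) * ce (θ * (1 + A Λ e)) := by
  set f : (ℕ → ℕ) → ℂ := fun ω => Complex.exp (Complex.I * (θ : ℂ) * ((Zvar Λ ω : ℝ) : ℂ))
    with hf
  have hfce : ∀ ω, f ω = ce (θ * Zvar Λ ω) := by
    intro ω
    have h1 : Complex.I * (θ : ℂ) * ((Zvar Λ ω : ℝ) : ℂ)
        = Complex.I * (((θ * Zvar Λ ω : ℝ)) : ℂ) := by push_cast; ring
    rw [hf]
    show Complex.exp (Complex.I * (θ : ℂ) * ((Zvar Λ ω : ℝ) : ℂ)) = ce (θ * Zvar Λ ω)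
    rw [ce, h1]
  have hmeas : Measurable f := by
    rw [hf]
    exact Complex.measurable_exp.comp
      (((Complex.measurable_ofReal.comp measurable_Zvar).const_mul (Complex.I * (θ : ℂ))))
  have hint : Integrable f P0 := by
    apply Integrable.mono' (integrable_const (1 : ℝ)) hmeas.aestronglyMeasurable
    apply Filter.Eventually.of_forall
    intro ω
    rw [hfce ω, norm_ce]
  -- the union of the cylinders has full measure
  have hUnion : P0 (⋃ e, Cyl e) = 1 := by
    rw [measure_iUnion cyl_disjoint measurableSet_cyl]
    have : ∀ e, P0 (Cyl e) = ENNReal.ofReal (w pu pd e) := cyl_measure hP0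
    rw [tsum_congr this, ← ENNReal.ofReal_tsum_of_nonneg
      (fun e => w_nonneg hpu.le hpd.le e) (summable_w hpu.le hpd.le hsum.le)]
    rw [tsum_w hpu hpd hsum hlt]
    simp
  have hcompl : P0 (⋃ e, Cyl e)ᶜ = 0 := by
    rw [measure_compl (MeasurableSet.iUnion measurableSet_cyl) (measure_ne_top _ _), hUnion]
    simp
  have hsplit : ∫ ω, f ω ∂P0 = ∫ ω in ⋃ e, Cyl e, f ω ∂P0 := by
    rw [← integral_add_compl (MeasurableSet.iUnion measurableSet_cyl) hint]
    have : ∫ ω in (⋃ e, Cyl e)ᶜ, f ω ∂P0 = 0 := by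
      rw [Measure.restrict_eq_zero.mpr hcompl]
      exact integral_zero_measure f
    rw [this, add_zero]
  have hpiece : ∀ e : Exc, ∫ ω in Cyl e, f ω ∂P0 = (w pu pd e : ℂ) * ce (θ * (1 + A Λ e)) := by
    intro e
    have hconst : ∀ ω ∈ Cyl e, f ω = ce (θ * (1 + A Λ e)) := by
      intro ω hω
      rw [hfce ω, Zvar_cyl hω]
    rw [setIntegral_congr_fun (measurableSet_cyl e) hconst, setIntegral_const,
      measureReal_def, cyl_measure hP0 e, ENNReal.toReal_ofReal (w_nonneg hpu.le hpd.le e)]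
    rw [Complex.real_smul]
  calc phiZ Λ P0 θ = ∫ ω, f ω ∂P0 := rfl
    _ = ∫ ω in ⋃ e, Cyl e, f ω ∂P0 := hsplit
    _ = ∑' e, ∫ ω in Cyl e, f ω ∂P0 :=
        integral_iUnion measurableSet_cyl cyl_disjoint hint.integrableOn
    _ = ∑' e, (w pu pd e : ℂ) * ce (θ * (1 + A Λ e)) := tsum_congr hpiece

theorem phiZ_eq_G {P0 : Measure (ℕ → ℕ)} [IsProbabilityMeasure P0]
    (hP0 : IsLevelChainLaw 1 pu pd (Measure.dirac 0) P0)
    (hpu : 0 < pu) (hpd : 0 < pd) (hsum : pu + pd = 1) (hlt : pu < pd) (θ : ℝ) :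
    phiZ Λ P0 θ = ce θ * G pu pd Λ θ := by
  rw [phiZ_eq_tsum hP0 hpu hpd hsum hlt θ, G, ← tsum_mul_left]
  apply tsum_congr
  intro e
  have : θ * (1 + A Λ e) = θ + θ * A Λ e := by ring
  rw [this, ce_add]
  ring

end Exc
end LevelChain




namespace LevelChain

open MeasureTheory

theorem norm_exp_I_mul (θ x : ℝ) : ‖Complex.exp (Complex.I * (θ : ℂ) * (x : ℂ))‖ = 1 := by
  have h : Complex.I * (θ : ℂ) * (x : ℂ) = Complex.I * ((θ * x : ℝ) : ℂ) := by
    push_cast; ring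
  rw [h]
  exact norm_ce (θ * x)

theorem charFun_norm_le {ψ : ℝ → ℂ} (h : IsCharFun ψ) (θ : ℝ) : ‖ψ θ‖ ≤ 1 := by
  obtain ⟨μ, hμ, hrep⟩ := h
  rw [hrep]
  calc ‖∫ x, Complex.exp (Complex.I * (θ : ℂ) * (x : ℂ)) ∂μ‖
      ≤ ∫ x, ‖Complex.exp (Complex.I * (θ : ℂ) * (x : ℂ))‖ ∂μ :=
        norm_integral_le_integral_norm _
    _ = ∫ _x, (1 : ℝ) ∂μ := by
        apply integral_congr_ae
        filter_upwards with x
        exact norm_exp_I_mul θ x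
    _ = 1 := by simp

theorem bdd_diff {χ₁ χ₂ : ℝ → ℂ} (h1 : ∀ θ, ‖χ₁ θ‖ ≤ 1) (h2 : ∀ θ, ‖χ₂ θ‖ ≤ 1) :
    BddAbove (Set.range fun θ => ‖χ₁ θ - χ₂ θ‖) := by
  refine ⟨2, ?_⟩
  rintro x ⟨θ, rfl⟩
  calc ‖χ₁ θ - χ₂ θ‖ ≤ ‖χ₁ θ‖ + ‖χ₂ θ‖ := norm_sub_le _ _
    _ ≤ 2 := by linarith [h1 θ, h2 θ]

section Main
variable {Λ pu pd : ℝ}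

theorem denom_lb (hpu : 0 < pu) (hpu1 : pu < 1) (hsum : pu + pd = 1)
    {a : ℂ} (ha : ‖a‖ ≤ 1) : pd ≤ ‖1 - (pu : ℂ) * a‖ := by
  have h1 : ‖(pu : ℂ) * a‖ ≤ pu := by
    rw [norm_mul, Complex.norm_real, Real.norm_eq_abs, abs_of_pos hpu]
    nlinarith
  have h2 : ‖(1 : ℂ)‖ - ‖(pu : ℂ) * a‖ ≤ ‖1 - (pu : ℂ) * a‖ := norm_sub_norm_le _ _
  rw [norm_one] at h2
  linarith

theorem denom_ne_zero (hpu : 0 < pu) (hpd : 0 < pd) (hpu1 : pu < 1) (hsum : pu + pd = 1)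
    {a : ℂ} (ha : ‖a‖ ≤ 1) : (1 : ℂ) - (pu : ℂ) * a ≠ 0 := by
  intro h
  have := denom_lb hpu hpu1 hsum ha
  rw [h, norm_zero] at this
  linarith

theorem mapF_pointwise (hpu : 0 < pu) (hpd : 0 < pd) (hpu1 : pu < 1) (hsum : pu + pd = 1)
    {ψ₁ ψ₂ : ℝ → ℂ} (h1 : ∀ θ, ‖ψ₁ θ‖ ≤ 1) (h2 : ∀ θ, ‖ψ₂ θ‖ ≤ 1)
    {d : ℝ} (hd : ∀ θ, ‖ψ₁ θ - ψ₂ θ‖ ≤ d) (θ : ℝ) :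
    ‖mapF Λ pu pd ψ₁ θ - mapF Λ pu pd ψ₂ θ‖ ≤ (pu / pd) * d := by
  set E : ℂ := Complex.exp (Complex.I * (((1 + Λ ^ 2) * θ : ℝ) : ℂ)) with hE
  set a : ℂ := ψ₁ (Λ ^ 2 * θ) with hadef
  set b : ℂ := ψ₂ (Λ ^ 2 * θ) with hbdef
  have hna : ‖a‖ ≤ 1 := h1 _
  have hnb : ‖b‖ ≤ 1 := h2 _
  have hx : pd ≤ ‖1 - (pu : ℂ) * a‖ := denom_lb hpu hpu1 hsum hna
  have hy : pd ≤ ‖1 - (pu : ℂ) * b‖ := denom_lb hpu hpu1 hsum hnb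
  have hx0 : (1 : ℂ) - (pu : ℂ) * a ≠ 0 := denom_ne_zero hpu hpd hpu1 hsum hna
  have hy0 : (1 : ℂ) - (pu : ℂ) * b ≠ 0 := denom_ne_zero hpu hpd hpu1 hsum hnb
  have hEnorm : ‖E‖ = 1 := by
    rw [hE]
    have : Complex.I * (((1 + Λ ^ 2) * θ : ℝ) : ℂ)
        = Complex.I * ((1 : ℝ) : ℂ) * (((1 + Λ ^ 2) * θ : ℝ) : ℂ) := by push_cast; ring
    rw [this]
    exact norm_exp_I_mul 1 ((1 + Λ ^ 2) * θ)
  have hID : mapF Λ pu pd ψ₁ θ - mapF Λ pu pd ψ₂ θ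
      = E * (pd : ℂ) * ((pu : ℂ) * (a - b)) / ((1 - (pu : ℂ) * a) * (1 - (pu : ℂ) * b)) := by
    show E * (pd : ℂ) / (1 - (pu : ℂ) * a) - E * (pd : ℂ) / (1 - (pu : ℂ) * b) = _
    field_simp
    ring
  rw [hID]
  rw [norm_div, norm_mul, norm_mul, norm_mul, norm_mul, hEnorm, one_mul]
  have hpdn : ‖(pd : ℂ)‖ = pd := by
    rw [Complex.norm_real, Real.norm_eq_abs, abs_of_pos hpd]
  have hpun : ‖(pu : ℂ)‖ = pu := by
    rw [Complex.norm_real, Real.norm_eq_abs, abs_of_pos hpu]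
  rw [hpdn, hpun]
  have hab : ‖a - b‖ ≤ d := hd _
  have hd0 : 0 ≤ d := le_trans (norm_nonneg _) hab
  calc pd * (pu * ‖a - b‖) / (‖1 - (pu : ℂ) * a‖ * ‖1 - (pu : ℂ) * b‖)
      ≤ pd * (pu * d) / (pd * pd) := by
        apply div_le_div₀ (by positivity)
        · have : pu * ‖a - b‖ ≤ pu * d := by nlinarith
          nlinarith
        · positivity
        · exact mul_le_mul hx hy hpd.le (le_trans hpd.le hx)
    _ = (pu / pd) * d := by field_simp

theorem mapF_norm_le (hpu : 0 < pu) (hpd : 0 < pd) (hpu1 : pu < 1) (hsum : pu + pd = 1)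
    {χ : ℝ → ℂ} (hχ : ∀ θ, ‖χ θ‖ ≤ 1) (θ : ℝ) : ‖mapF Λ pu pd χ θ‖ ≤ 1 := by
  have hx : pd ≤ ‖1 - (pu : ℂ) * χ (Λ ^ 2 * θ)‖ := denom_lb hpu hpu1 hsum (hχ _)
  have : mapF Λ pu pd χ θ = Complex.exp (Complex.I * (((1 + Λ ^ 2) * θ : ℝ) : ℂ)) * (pd : ℂ) /
      (1 - (pu : ℂ) * χ (Λ ^ 2 * θ)) := rfl
  rw [this, norm_div, norm_mul]
  have hE : ‖Complex.exp (Complex.I * (((1 + Λ ^ 2) * θ : ℝ) : ℂ))‖ = 1 := by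
    have h : Complex.I * (((1 + Λ ^ 2) * θ : ℝ) : ℂ)
        = Complex.I * ((1 : ℝ) : ℂ) * (((1 + Λ ^ 2) * θ : ℝ) : ℂ) := by push_cast; ring
    rw [h]
    exact norm_exp_I_mul 1 ((1 + Λ ^ 2) * θ)
  rw [hE, one_mul]
  have hpdn : ‖(pd : ℂ)‖ = pd := by
    rw [Complex.norm_real, Real.norm_eq_abs, abs_of_pos hpd]
  rw [hpdn]
  rw [div_le_one (lt_of_lt_of_le hpd hx)]
  exact hx

end Main
end LevelChain

/-- The map `ℱ` is a `(p↑/p↓)`-contraction (in sup norm) on functions bounded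
by 1; consequently `φ_Z` is its unique fixed point among characteristic functions, and for any
characteristic function `ψ`, `ℱⁿ(ψ) → φ_Z` uniformly with exponential rate. -/
theorem mapF_contraction (Λ pu pd : ℝ) (hΛ : 1 < Λ)
    (hpu : 0 < pu) (hpd : 0 < pd) (hpu1 : pu < 1) (hpd1 : pd < 1) (hsum : pu + pd = 1)
    (hratio1 : 1 < pd / pu) (hratio2 : pd / pu < Λ ^ 2)
    (P0 : Measure (ℕ → ℕ)) [IsProbabilityMeasure P0]
    (hP0 : IsLevelChainLaw 1 pu pd (Measure.dirac 0) P0) :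
    pu / pd < 1 ∧
    (∀ ψ₁ ψ₂ : ℝ → ℂ, (∀ θ, ‖ψ₁ θ‖ ≤ 1) → (∀ θ, ‖ψ₂ θ‖ ≤ 1) →
      (⨆ θ : ℝ, ‖mapF Λ pu pd ψ₁ θ - mapF Λ pu pd ψ₂ θ‖) ≤
        (pu / pd) * ⨆ θ : ℝ, ‖ψ₁ θ - ψ₂ θ‖) ∧
    mapF Λ pu pd (phiZ Λ P0) = phiZ Λ P0 ∧
    (∀ ψ : ℝ → ℂ, IsCharFun ψ → mapF Λ pu pd ψ = ψ → ψ = phiZ Λ P0) ∧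
    (∀ ψ : ℝ → ℂ, IsCharFun ψ → ∃ C : ℝ, ∀ n : ℕ, ∀ θ : ℝ,
      ‖(mapF Λ pu pd)^[n] ψ θ - phiZ Λ P0 θ‖ ≤ C * (pu / pd) ^ n) := by
  have hlt : pu < pd := by
    rw [lt_div_iff₀ hpu] at hratio1; linarith
  have hr1 : pu / pd < 1 := (div_lt_one hpd).mpr hlt
  have hr0 : 0 ≤ pu / pd := by positivity
  have hcontr : ∀ ψ₁ ψ₂ : ℝ → ℂ, (∀ θ, ‖ψ₁ θ‖ ≤ 1) → (∀ θ, ‖ψ₂ θ‖ ≤ 1) →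
      (⨆ θ : ℝ, ‖mapF Λ pu pd ψ₁ θ - mapF Λ pu pd ψ₂ θ‖) ≤
        (pu / pd) * ⨆ θ : ℝ, ‖ψ₁ θ - ψ₂ θ‖ := by
    intro ψ₁ ψ₂ h1 h2
    have hbdd := LevelChain.bdd_diff h1 h2
    have hd : ∀ θ, ‖ψ₁ θ - ψ₂ θ‖ ≤ ⨆ θ : ℝ, ‖ψ₁ θ - ψ₂ θ‖ := fun θ => le_ciSup hbdd θ
    exact ciSup_le fun θ => LevelChain.mapF_pointwise hpu hpd hpu1 hsum h1 h2 hd θ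
  have hG := fun θ : ℝ => LevelChain.Exc.phiZ_eq_G (Λ := Λ) hP0 hpu hpd hsum hlt θ
  have hGle : ∀ t : ℝ, ‖LevelChain.Exc.G pu pd Λ t‖ ≤ 1 := fun t =>
    LevelChain.Exc.norm_G_le_one hpu hpd hsum hlt t
  have hphile : ∀ θ, ‖phiZ Λ P0 θ‖ ≤ 1 := by
    intro θ
    rw [hG θ, norm_mul, LevelChain.norm_ce, one_mul]
    exact hGle θ
  have hfix : mapF Λ pu pd (phiZ Λ P0) = phiZ Λ P0 := by
    funext θ
    have hDne : (1 : ℂ) - (pu : ℂ) * phiZ Λ P0 (Λ ^ 2 * θ) ≠ 0 :=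
      LevelChain.denom_ne_zero hpu hpd hpu1 hsum (hphile _)
    have hstart : mapF Λ pu pd (phiZ Λ P0) θ
        = LevelChain.ce ((1 + Λ ^ 2) * θ) * (pd : ℂ)
          / (1 - (pu : ℂ) * phiZ Λ P0 (Λ ^ 2 * θ)) := rfl
    rw [hG (Λ ^ 2 * θ)] at hDne
    rw [hstart, hG θ, hG (Λ ^ 2 * θ), div_eq_iff hDne]
    have hsplit : (1 + Λ ^ 2) * θ = θ + Λ ^ 2 * θ := by ring
    rw [hsplit, LevelChain.ce_add]
    have hrec := LevelChain.Exc.G_rec (Λ := Λ) hpu hpd hsum θ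
    linear_combination (-(LevelChain.ce θ)) * hrec
  refine ⟨hr1, hcontr, hfix, ?_, ?_⟩
  · -- uniqueness
    intro ψ hchar hfixψ
    have hψ1 := LevelChain.charFun_norm_le hchar
    have hbdd := LevelChain.bdd_diff hψ1 hphile
    have hd : (⨆ θ : ℝ, ‖ψ θ - phiZ Λ P0 θ‖) ≤ (pu / pd) * ⨆ θ : ℝ, ‖ψ θ - phiZ Λ P0 θ‖ := by
      have h := hcontr ψ (phiZ Λ P0) hψ1 hphile
      rwa [hfixψ, hfix] at h
    have hd0 : 0 ≤ ⨆ θ : ℝ, ‖ψ θ - phiZ Λ P0 θ‖ :=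
      le_trans (norm_nonneg _) (le_ciSup hbdd 0)
    have hdle : (⨆ θ : ℝ, ‖ψ θ - phiZ Λ P0 θ‖) ≤ 0 := by nlinarith
    funext θ
    have h1 : ‖ψ θ - phiZ Λ P0 θ‖ ≤ 0 := le_trans (le_ciSup hbdd θ) hdle
    exact sub_eq_zero.mp (norm_le_zero_iff.mp h1)
  · -- convergence
    intro ψ hchar
    refine ⟨2, ?_⟩
    have hψ1 := LevelChain.charFun_norm_le hchar
    have hiterb : ∀ n : ℕ, ∀ θ : ℝ, ‖(mapF Λ pu pd)^[n] ψ θ‖ ≤ 1 := by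
      intro n
      induction n with
      | zero => simpa using hψ1
      | succ n ih =>
        intro θ
        rw [Function.iterate_succ_apply']
        exact LevelChain.mapF_norm_le hpu hpd hpu1 hsum ih θ
    have hsup : ∀ n : ℕ, (⨆ θ : ℝ, ‖(mapF Λ pu pd)^[n] ψ θ - phiZ Λ P0 θ‖)
        ≤ 2 * (pu / pd) ^ n := by
      intro n
      induction n with
      | zero =>
        apply ciSup_le
        intro θ
        simp only [Function.iterate_zero, id_eq, pow_zero, mul_one]
        calc ‖ψ θ - phiZ Λ P0 θ‖ ≤ ‖ψ θ‖ + ‖phiZ Λ P0 θ‖ := norm_sub_le _ _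
          _ ≤ 2 := by linarith [hψ1 θ, hphile θ]
      | succ n ih =>
        have step : (⨆ θ : ℝ, ‖(mapF Λ pu pd)^[n + 1] ψ θ - phiZ Λ P0 θ‖)
            ≤ (pu / pd) * ⨆ θ : ℝ, ‖(mapF Λ pu pd)^[n] ψ θ - phiZ Λ P0 θ‖ := by
          have h := hcontr ((mapF Λ pu pd)^[n] ψ) (phiZ Λ P0) (hiterb n) hphile
          rw [hfix] at h
          have hit : ∀ θ : ℝ, (mapF Λ pu pd)^[n + 1] ψ θ
              = mapF Λ pu pd ((mapF Λ pu pd)^[n] ψ) θ := by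
            intro θ; rw [Function.iterate_succ_apply']
          simp only [hit]
          exact h
        calc (⨆ θ : ℝ, ‖(mapF Λ pu pd)^[n + 1] ψ θ - phiZ Λ P0 θ‖)
            ≤ (pu / pd) * (2 * (pu / pd) ^ n) :=
              le_trans step (mul_le_mul_of_nonneg_left ih hr0)
          _ = 2 * (pu / pd) ^ (n + 1) := by ring
    intro n θ
    exact le_trans (le_ciSup (LevelChain.bdd_diff (hiterb n) hphile) θ) (hsup n)
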